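/- arXiv:1706.08382 — 5 statements merged into one kernel-verified Lean document; each statement's English description precedes it below -/
import Mathlib

section
/- In a simple majority voting system with an odd number N = 2n+1 of voters, the Shapley-Shubik probability that voter 1 votes no and the coalition of yes-voters is losing (i.e., has at most n yes-votes among voters 2..N) equals 3/8 + 1/(8N). -/
open scoped Classical

/-- In a simple majority voting system with an odd number `N = 2n+1` of voters,
the Shapley-Shubik probability that voter 1 votes no and the coalition of
yes-voters is losing (at most `n` yes-votes among the other voters) equals
`3/8 + 1/(8N)`. -/
theorem shapley_shubik_blocking_success_odd (n : ℕ) :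
    (∑ A ∈ Finset.univ.filter
        (fun A : Finset (Fin (2 * n + 1)) =>
          (⟨0, by omega⟩ : Fin (2 * n + 1)) ∉ A ∧ A.card ≤ n),
      1 / ((((2 * n + 1 : ℕ) : ℝ) + 1) * ((2 * n + 1).choose A.card : ℝ)))
      = 3 / 8 + 1 / (8 * ((2 * n + 1 : ℕ) : ℝ)) := by
  classical
  set x0 : Fin (2 * n + 1) := ⟨0, by omega⟩ with hx0
  set S := Finset.univ.filter
      (fun A : Finset (Fin (2 * n + 1)) => x0 ∉ A ∧ A.card ≤ n) with hS
  have hmaps : ∀ A ∈ S, A.card ∈ Finset.range (n + 1) := by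
    intro A hA
    simp only [hS, Finset.mem_filter] at hA
    simpa using Nat.lt_succ_of_le hA.2.2
  rw [← Finset.sum_fiberwise_of_maps_to hmaps
    (fun A => 1 / ((((2 * n + 1 : ℕ) : ℝ) + 1) * ((2 * n + 1).choose A.card : ℝ)))]
  have hfiber : ∀ k ∈ Finset.range (n + 1),
      S.filter (fun A => A.card = k)
        = Finset.powersetCard k ((Finset.univ : Finset (Fin (2 * n + 1))).erase x0) := by
    intro k hk
    simp only [Finset.mem_range] at hk
    ext A
    simp only [hS, Finset.mem_filter, Finset.mem_univ, true_and,
      Finset.mem_powersetCard, Finset.subset_erase, Finset.subset_univ, true_and]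
    constructor
    · rintro ⟨⟨h1, _⟩, h3⟩; exact ⟨h1, h3⟩
    · rintro ⟨h1, h3⟩; exact ⟨⟨h1, by omega⟩, h3⟩
  have hcard : ((Finset.univ : Finset (Fin (2 * n + 1))).erase x0).card = 2 * n := by
    rw [Finset.card_erase_of_mem (Finset.mem_univ _)]
    simp
  have hstep : ∀ k ∈ Finset.range (n + 1),
      (∑ A ∈ S.filter (fun A => A.card = k),
        1 / ((((2 * n + 1 : ℕ) : ℝ) + 1) * ((2 * n + 1).choose A.card : ℝ)))
      = (2 * n + 1 - (k : ℝ)) / (((2 * n + 1 : ℕ) : ℝ) + 1) / ((2 * n + 1 : ℕ) : ℝ) := by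
    intro k hk
    simp only [Finset.mem_range] at hk
    have : (∑ A ∈ S.filter (fun A => A.card = k),
        1 / ((((2 * n + 1 : ℕ) : ℝ) + 1) * ((2 * n + 1).choose A.card : ℝ)))
        = (S.filter (fun A => A.card = k)).card
          • (1 / ((((2 * n + 1 : ℕ) : ℝ) + 1) * ((2 * n + 1).choose k : ℝ))) := by
      rw [Finset.sum_congr rfl (fun A hA => by
        simp only [Finset.mem_filter] at hA
        rw [hA.2]), Finset.sum_const]
    rw [this, hfiber k (by simpa using hk), Finset.card_powersetCard, hcard,
      nsmul_eq_mul]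
    have hkey : ((2 * n).choose k : ℝ) * (2 * n + 1)
        = ((2 * n + 1).choose k : ℝ) * (2 * n + 1 - k) := by
      have := Nat.choose_mul_succ_eq (2 * n) k
      have hk' : k ≤ 2 * n + 1 := by omega
      have := congrArg (fun m : ℕ => (m : ℝ)) this
      push_cast [Nat.cast_sub hk'] at this
      linarith
    have hne : ((2 * n + 1).choose k : ℝ) ≠ 0 := by
      exact_mod_cast Nat.choose_pos (by omega : k ≤ 2 * n + 1) |>.ne'
    have hN : ((2 * n + 1 : ℕ) : ℝ) ≠ 0 := by positivity
    push_cast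
    field_simp
    nlinarith [hkey]
  rw [Finset.sum_congr rfl hstep]
  have hsum : ∑ k ∈ Finset.range (n + 1), (2 * n + 1 - (k : ℝ))
      = (n + 1) * (2 * n + 1) - n * (n + 1) / 2 := by
    rw [Finset.sum_sub_distrib, Finset.sum_const, Finset.card_range]
    have h2 : (∑ i ∈ Finset.range (n + 1), (i : ℝ)) = n * (n + 1) / 2 := by
      have := Finset.sum_range_id_mul_two (n + 1)
      have := congrArg (fun m : ℕ => (m : ℝ)) this
      push_cast at this
      linarith
    rw [h2]
    ring
  rw [← Finset.sum_div, ← Finset.sum_div, hsum]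
  have hN : ((2 * n + 1 : ℕ) : ℝ) ≠ 0 := by positivity
  field_simp
  push_cast
  ring
end

section
/- In a simple majority voting system with an even number N of voters (winning = strictly more than N/2 yes-votes), the Shapley-Shubik affirmative success of a voter equals 3/8 - 1/(8(N+1)) and the blocking success equals 3/8 + 3/(8(N+1)); hence the total rate of success equals 3/4 + 1/(4(N+1)). -/
open scoped Classical

open Finset

lemma count_notmem (n k : ℕ) (v : Fin n) :
    (univ.filter (fun A : Finset (Fin n) => v ∉ A ∧ A.card = k)).card = (n-1).choose k := by
  classical
  have h : univ.filter (fun A : Finset (Fin n) => v ∉ A ∧ A.card = k)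
      = Finset.powersetCard k (univ.erase v) := by
    ext A
    simp [Finset.mem_powersetCard, Finset.subset_erase, and_comm]
  rw [h, Finset.card_powersetCard, Finset.card_erase_of_mem (mem_univ v), Finset.card_univ,
    Fintype.card_fin]

lemma count_card (n k : ℕ) :
    (univ.filter (fun A : Finset (Fin n) => A.card = k)).card = n.choose k := by
  classical
  have h : univ.filter (fun A : Finset (Fin n) => A.card = k)
      = Finset.powersetCard k univ := by
    ext A; simp [Finset.mem_powersetCard]
  rw [h, Finset.card_powersetCard, Finset.card_univ, Fintype.card_fin]

lemma count_mem (n k : ℕ) (v : Fin n) :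
    (univ.filter (fun A : Finset (Fin n) => v ∈ A ∧ A.card = k)).card
      = n.choose k - (n-1).choose k := by
  classical
  have h := Finset.card_filter_add_card_filter_not
    (s := univ.filter (fun A : Finset (Fin n) => A.card = k)) (p := fun A => v ∈ A)
  rw [Finset.filter_filter, Finset.filter_filter] at h
  simp only [count_card n k] at h
  have h2 : (univ.filter fun A : Finset (Fin n) => A.card = k ∧ v ∈ A)
      = univ.filter fun A : Finset (Fin n) => v ∈ A ∧ A.card = k := by
    apply Finset.filter_congr; intro A _; exact and_comm
  have h3 : (univ.filter fun A : Finset (Fin n) => A.card = k ∧ v ∉ A)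
      = univ.filter fun A : Finset (Fin n) => v ∉ A ∧ A.card = k := by
    apply Finset.filter_congr; intro A _; exact and_comm
  rw [h2, h3, count_notmem] at h
  omega

lemma sum_fiber (n : ℕ) (P : Finset (Fin n) → Prop) [DecidablePred P] (f : ℕ → ℝ) :
    ∑ A ∈ univ.filter P, f A.card
      = ∑ k ∈ range (n+1),
          ((univ.filter fun A : Finset (Fin n) => P A ∧ A.card = k).card : ℝ) * f k := by
  classical
  rw [← Finset.sum_fiberwise_of_maps_to (g := Finset.card) (t := range (n+1))
    (fun A _ => Finset.mem_range.2 (Nat.lt_succ_of_le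
      (le_trans (Finset.card_le_univ A) (by simp)))) (fun A => f A.card)]
  refine Finset.sum_congr rfl (fun k _ => ?_)
  rw [Finset.filter_filter]
  rw [Finset.sum_congr rfl (fun A hA => by rw [(Finset.mem_filter.1 hA).2.2] :
    ∀ A ∈ univ.filter fun A : Finset (Fin n) => P A ∧ A.card = k, f A.card = f k)]
  rw [Finset.sum_const, nsmul_eq_mul]


lemma gauss_Ico (m : ℕ) : ∑ k ∈ Finset.Ico (m+1) (2*m+1), (k:ℝ) = (3*m^2+m)/2 := by
  have h1 : (∑ k ∈ Finset.Ico 0 (m+1), k) + ∑ k ∈ Finset.Ico (m+1) (2*m+1), k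
      = ∑ k ∈ Finset.Ico 0 (2*m+1), k :=
    Finset.sum_Ico_consecutive _ (by omega) (by omega)
  have g1 : (∑ i ∈ range (m+1), i) * 2 = (m+1)*m := by
    rw [Finset.sum_range_id_mul_two]; simp
  have g2 : (∑ i ∈ range (2*m+1), i) * 2 = (2*m+1)*(2*m) := by
    rw [Finset.sum_range_id_mul_two]; simp
  rw [← Finset.range_eq_Ico, ← Finset.range_eq_Ico] at h1
  have h2 : (∑ k ∈ Finset.Ico (m+1) (2*m+1), k) * 2 = 3*m*m + m := by nlinarith
  have h3 : ((∑ k ∈ Finset.Ico (m+1) (2*m+1), k : ℕ) : ℝ) * 2 = 3*(m:ℝ)*m + m := by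
    exact_mod_cast congrArg (Nat.cast : ℕ → ℝ) h2
  push_cast at h3 ⊢
  nlinarith [h3]

lemma gauss_range (m : ℕ) : ∑ k ∈ range (m+1), ((2*m:ℝ) - (k:ℝ)) = 3*m*(m+1)/2 := by
  rw [Finset.sum_sub_distrib, Finset.sum_const, Finset.card_range, nsmul_eq_mul]
  have g1 : (∑ i ∈ range (m+1), i) * 2 = (m+1)*m := by
    rw [Finset.sum_range_id_mul_two]; simp
  have g2 : ((∑ i ∈ range (m+1), i : ℕ) : ℝ) * 2 = ((m:ℝ)+1)*m := by
    exact_mod_cast congrArg (Nat.cast : ℕ → ℝ) g1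
  push_cast at g2 ⊢
  nlinarith [g2]

lemma aff_sum (m : ℕ) (hm : 1 ≤ m) (v : Fin (2 * m)) :
    (∑ A ∈ Finset.univ.filter
        (fun A : Finset (Fin (2 * m)) => v ∈ A ∧ m < A.card),
      1 / ((((2 * m : ℕ) : ℝ) + 1) * ((2 * m).choose A.card : ℝ)))
      = 3 / 8 - 1 / (8 * (((2 * m : ℕ) : ℝ) + 1)) := by
  classical
  rw [sum_fiber (2*m) _ (fun k => 1 / ((((2 * m : ℕ) : ℝ) + 1) * ((2 * m).choose k : ℝ)))]
  have hterm : ∀ k ∈ range (2*m+1),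
      ((univ.filter fun A : Finset (Fin (2*m)) => (v ∈ A ∧ m < A.card) ∧ A.card = k).card : ℝ)
        * (1 / ((((2 * m : ℕ) : ℝ) + 1) * ((2 * m).choose k : ℝ)))
      = if m < k then (k:ℝ) / (((2*m:ℕ):ℝ) * (((2*m:ℕ):ℝ)+1)) else 0 := by
    intro k hk
    rw [Finset.mem_range] at hk
    by_cases h : m < k
    · rw [if_pos h]
      have hfil : (univ.filter fun A : Finset (Fin (2*m)) => (v ∈ A ∧ m < A.card) ∧ A.card = k)
          = univ.filter fun A : Finset (Fin (2*m)) => v ∈ A ∧ A.card = k := by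
        apply Finset.filter_congr; intro A _
        constructor
        · rintro ⟨⟨h1,_⟩,h3⟩; exact ⟨h1,h3⟩
        · rintro ⟨h1,h3⟩; exact ⟨⟨h1, h3 ▸ h⟩, h3⟩
      rw [hfil, count_mem]
      obtain ⟨j, rfl⟩ : ∃ j, k = j+1 := ⟨k-1, by omega⟩
      obtain ⟨s, hs⟩ : ∃ s, 2*m = s+1 := ⟨2*m-1, by omega⟩
      have hP : (s+1).choose (j+1) = s.choose j + s.choose (j+1) := Nat.choose_succ_succ s j
      have hmul : (s+1) * s.choose j = (s+1).choose (j+1) * (j+1) := Nat.add_one_mul_choose_eq s j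
      have hse : 2*m-1 = s := by omega
      have hle : j+1 ≤ 2*m := by omega
      have hpos : 0 < (2*m).choose (j+1) := Nat.choose_pos hle
      have hdiff : (2*m).choose (j+1) - (2*m-1).choose (j+1) = (2*m-1).choose j := by
        rw [hse, hs, hP]; omega
      rw [hdiff]
      have hkey : ((2*m-1).choose j : ℝ) * (2*m) = ((j:ℝ)+1) * ((2*m).choose (j+1)) := by
        have hms : (2:ℝ)*(m:ℝ) = (s:ℝ)+1 := by exact_mod_cast hs
        have hc := congrArg (Nat.cast : ℕ → ℝ) hmul
        push_cast at hc
        rw [hse, hs, hms]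
        push_cast
        linarith [hc]
      have hC : ((2*m).choose (j+1) : ℝ) ≠ 0 := by positivity
      have hN : ((2*m:ℕ):ℝ) ≠ 0 := by positivity
      have hN1 : ((2*m:ℕ):ℝ) + 1 ≠ 0 := by positivity
      field_simp
      push_cast
      nlinarith [hkey]
    · rw [if_neg h]
      have : (univ.filter fun A : Finset (Fin (2*m)) => (v ∈ A ∧ m < A.card) ∧ A.card = k) = ∅ := by
        rw [Finset.filter_eq_empty_iff]
        rintro A - ⟨⟨-, h2⟩, h3⟩
        omega
      rw [this]; simp
  rw [Finset.sum_congr rfl hterm, ← Finset.sum_filter]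
  have hfil2 : (range (2*m+1)).filter (fun k => m < k) = Finset.Ico (m+1) (2*m+1) := by
    ext k; simp [Finset.mem_Ico]; omega
  rw [hfil2, ← Finset.sum_div, gauss_Ico]
  have hN : (0:ℝ) < ((2*m:ℕ):ℝ) := by exact_mod_cast (by omega : 0 < 2*m)
  have hN1 : (0:ℝ) < ((2*m:ℕ):ℝ) + 1 := by positivity
  field_simp
  push_cast
  ring

lemma blk_sum (m : ℕ) (hm : 1 ≤ m) (v : Fin (2 * m)) :
    (∑ A ∈ Finset.univ.filter
        (fun A : Finset (Fin (2 * m)) => v ∉ A ∧ A.card ≤ m),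
      1 / ((((2 * m : ℕ) : ℝ) + 1) * ((2 * m).choose A.card : ℝ)))
      = 3 / 8 + 3 / (8 * (((2 * m : ℕ) : ℝ) + 1)) := by
  classical
  rw [sum_fiber (2*m) _ (fun k => 1 / ((((2 * m : ℕ) : ℝ) + 1) * ((2 * m).choose k : ℝ)))]
  have hterm : ∀ k ∈ range (2*m+1),
      ((univ.filter fun A : Finset (Fin (2*m)) => (v ∉ A ∧ A.card ≤ m) ∧ A.card = k).card : ℝ)
        * (1 / ((((2 * m : ℕ) : ℝ) + 1) * ((2 * m).choose k : ℝ)))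
      = if k ≤ m then (((2*m:ℕ):ℝ) - (k:ℝ)) / (((2*m:ℕ):ℝ) * (((2*m:ℕ):ℝ)+1)) else 0 := by
    intro k hk
    rw [Finset.mem_range] at hk
    by_cases h : k ≤ m
    · rw [if_pos h]
      have hfil : (univ.filter fun A : Finset (Fin (2*m)) => (v ∉ A ∧ A.card ≤ m) ∧ A.card = k)
          = univ.filter fun A : Finset (Fin (2*m)) => v ∉ A ∧ A.card = k := by
        apply Finset.filter_congr; intro A _
        constructor
        · rintro ⟨⟨h1,_⟩,h3⟩; exact ⟨h1,h3⟩
        · rintro ⟨h1,h3⟩; exact ⟨⟨h1, h3 ▸ h⟩, h3⟩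
      rw [hfil, count_notmem]
      obtain ⟨s, hs⟩ : ∃ s, 2*m = s+1 := ⟨2*m-1, by omega⟩
      have hse : 2*m-1 = s := by omega
      have hmul : s.choose k * (s+1) = (s+1).choose k * (s+1-k) := Nat.choose_mul_succ_eq s k
      have hle : k ≤ 2*m := by omega
      have hpos : 0 < (2*m).choose k := Nat.choose_pos hle
      have hkey : ((2*m-1).choose k : ℝ) * (2*m) = (((2*m:ℕ):ℝ) - (k:ℝ)) * ((2*m).choose k) := by
        have hms : (2:ℝ)*(m:ℝ) = (s:ℝ)+1 := by exact_mod_cast hs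
        have hc := congrArg (Nat.cast : ℕ → ℝ) hmul
        have hsub : ((s+1-k : ℕ) : ℝ) = (s:ℝ)+1-(k:ℝ) := by
          have hks : k ≤ s+1 := by omega
          push_cast [hks]; ring
        rw [Nat.cast_mul, Nat.cast_mul, hsub] at hc
        push_cast at hc
        rw [hse, hs]
        push_cast
        rw [hms]
        linarith [hc]
      have hC : ((2*m).choose k : ℝ) ≠ 0 := by positivity
      have hN : ((2*m:ℕ):ℝ) ≠ 0 := by exact_mod_cast (by omega : 2*m ≠ 0)
      have hN1 : ((2*m:ℕ):ℝ) + 1 ≠ 0 := by positivity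
      field_simp
      push_cast at hkey ⊢
      linear_combination hkey
    · rw [if_neg h]
      have : (univ.filter fun A : Finset (Fin (2*m)) => (v ∉ A ∧ A.card ≤ m) ∧ A.card = k) = ∅ := by
        rw [Finset.filter_eq_empty_iff]
        rintro A - ⟨⟨-, h2⟩, h3⟩
        omega
      rw [this]; simp
  rw [Finset.sum_congr rfl hterm, ← Finset.sum_filter]
  have hfil2 : (range (2*m+1)).filter (fun k => k ≤ m) = range (m+1) := by
    ext k; simp; omega
  rw [hfil2, ← Finset.sum_div]
  have hg : ∑ k ∈ range (m+1), (((2*m:ℕ):ℝ) - (k:ℝ)) = 3*m*(m+1)/2 := by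
    have := gauss_range m
    push_cast at this ⊢
    linarith [this]
  rw [hg]
  have hN : (0:ℝ) < ((2*m:ℕ):ℝ) := by exact_mod_cast (by omega : 0 < 2*m)
  have hN1 : (0:ℝ) < ((2*m:ℕ):ℝ) + 1 := by positivity
  field_simp
  push_cast
  ring

/-- In a simple majority voting system with an even number `N = 2m` of voters
(winning = strictly more than `N/2` yes-votes), the Shapley-Shubik affirmative
success of a voter equals `3/8 - 1/(8(N+1))`, the blocking success equals
`3/8 + 3/(8(N+1))`, and hence the total rate of success equals `3/4 + 1/(4(N+1))`. -/
theorem shapley_shubik_success_even (m : ℕ) (hm : 1 ≤ m) (v : Fin (2 * m)) :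
    (∑ A ∈ Finset.univ.filter
        (fun A : Finset (Fin (2 * m)) => v ∈ A ∧ m < A.card),
      1 / ((((2 * m : ℕ) : ℝ) + 1) * ((2 * m).choose A.card : ℝ)))
      = 3 / 8 - 1 / (8 * (((2 * m : ℕ) : ℝ) + 1)) ∧
    (∑ A ∈ Finset.univ.filter
        (fun A : Finset (Fin (2 * m)) => v ∉ A ∧ A.card ≤ m),
      1 / ((((2 * m : ℕ) : ℝ) + 1) * ((2 * m).choose A.card : ℝ)))
      = 3 / 8 + 3 / (8 * (((2 * m : ℕ) : ℝ) + 1)) ∧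
    (∑ A ∈ Finset.univ.filter
        (fun A : Finset (Fin (2 * m)) => v ∈ A ∧ m < A.card),
      1 / ((((2 * m : ℕ) : ℝ) + 1) * ((2 * m).choose A.card : ℝ))) +
    (∑ A ∈ Finset.univ.filter
        (fun A : Finset (Fin (2 * m)) => v ∉ A ∧ A.card ≤ m),
      1 / ((((2 * m : ℕ) : ℝ) + 1) * ((2 * m).choose A.card : ℝ)))
      = 3 / 4 + 1 / (4 * (((2 * m : ℕ) : ℝ) + 1)) := by
  refine ⟨aff_sum m hm v, blk_sum m hm v, ?_⟩
  rw [aff_sum m hm v, blk_sum m hm v]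
  have hN1 : (0:ℝ) < ((2*m:ℕ):ℝ) + 1 := by positivity
  field_simp
  ring
end

section
/- For the Shapley-Shubik measure on N voters with threshold M (1 ≤ M ≤ N-1), the probability that voter 1 votes yes and at least M of the other N-1 voters vote yes equals 1/2 - M(M+1)/(2N(N+1)). -/
open scoped Classical

lemma gauss_sum_real (n : ℕ) : ∑ j ∈ Finset.range n, ((j:ℝ) + 1) = n * (n+1) / 2 := by
  induction n with
  | zero => simp
  | succ n ih => rw [Finset.sum_range_succ, ih]; push_cast; ring

/-- For the Shapley-Shubik measure on `N` voters with threshold `M`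
(`1 ≤ M ≤ N-1`), the probability that voter 1 votes yes and at least `M` of the
other `N-1` voters vote yes equals `1/2 - M(M+1)/(2N(N+1))`. -/
theorem shapley_shubik_threshold_success (N M : ℕ) (hM : 1 ≤ M) (hMN : M + 1 ≤ N) :
    (∑ A ∈ Finset.univ.filter
        (fun A : Finset (Fin N) =>
          (⟨0, by omega⟩ : Fin N) ∈ A ∧ M ≤ (A.erase (⟨0, by omega⟩ : Fin N)).card),
      1 / (((N : ℝ) + 1) * (N.choose A.card : ℝ)))
      = 1 / 2 - (M : ℝ) * ((M : ℝ) + 1) / (2 * (N : ℝ) * ((N : ℝ) + 1)) := by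
  have hN : 1 ≤ N := by omega
  set e : Fin N := ⟨0, by omega⟩ with he
  have key : (∑ A ∈ Finset.univ.filter
        (fun A : Finset (Fin N) => e ∈ A ∧ M ≤ (A.erase e).card),
      1 / (((N : ℝ) + 1) * (N.choose A.card : ℝ)))
      = ∑ B ∈ (Finset.univ.erase e).powerset.filter (fun B => M ≤ B.card),
          1 / (((N : ℝ) + 1) * (N.choose (B.card + 1) : ℝ)) := by
    refine Finset.sum_nbij' (fun A => A.erase e) (fun B => insert e B) ?_ ?_ ?_ ?_ ?_
    · intro A hA
      simp only [Finset.mem_filter, Finset.mem_univ, true_and] at hA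
      simp only [Finset.mem_filter, Finset.mem_powerset]
      exact ⟨Finset.erase_subset_erase e (Finset.subset_univ A), hA.2⟩
    · intro B hB
      simp only [Finset.mem_filter, Finset.mem_powerset] at hB
      have heB : e ∉ B := fun h => (Finset.mem_erase.mp (hB.1 h)).1 rfl
      simp only [Finset.mem_filter, Finset.mem_univ, true_and]
      rw [Finset.erase_insert heB]
      exact ⟨Finset.mem_insert_self e B, hB.2⟩
    · intro A hA
      simp only [Finset.mem_filter, Finset.mem_univ, true_and] at hA
      exact Finset.insert_erase hA.1
    · intro B hB
      simp only [Finset.mem_filter, Finset.mem_powerset] at hB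
      have heB : e ∉ B := fun h => (Finset.mem_erase.mp (hB.1 h)).1 rfl
      exact Finset.erase_insert heB
    · intro A hA
      simp only [Finset.mem_filter, Finset.mem_univ, true_and] at hA
      have hc : (A.erase e).card + 1 = A.card := by
        rw [Finset.card_erase_of_mem hA.1]
        have : 1 ≤ A.card := Finset.card_pos.mpr ⟨e, hA.1⟩
        omega
      rw [hc]
  rw [key, Finset.sum_filter, Finset.sum_powerset]
  have hcard : (Finset.univ.erase e).card = N - 1 := by
    rw [Finset.card_erase_of_mem (Finset.mem_univ e), Finset.card_univ, Fintype.card_fin]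
  rw [hcard]
  have hrange : N - 1 + 1 = N := by omega
  rw [hrange]
  have hinner : ∀ j ∈ Finset.range N,
      (∑ B ∈ Finset.powersetCard j (Finset.univ.erase e),
        if M ≤ B.card then 1 / (((N : ℝ) + 1) * (N.choose (B.card + 1) : ℝ)) else 0)
      = if M ≤ j then ((j:ℝ)+1) / ((N:ℝ) * ((N:ℝ)+1)) else 0 := by
    intro j hj
    rw [Finset.mem_range] at hj
    have hterm : ∀ B ∈ Finset.powersetCard j (Finset.univ.erase e),
        (if M ≤ B.card then 1 / (((N : ℝ) + 1) * (N.choose (B.card + 1) : ℝ)) else 0)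
        = if M ≤ j then 1 / (((N : ℝ) + 1) * (N.choose (j + 1) : ℝ)) else 0 := by
      intro B hB
      rw [(Finset.mem_powersetCard.mp hB).2]
    rw [Finset.sum_congr rfl hterm, Finset.sum_const, Finset.card_powersetCard, hcard,
      nsmul_eq_mul]
    have hid : (N:ℝ) * ((N-1).choose j : ℝ) = (N.choose (j+1) : ℝ) * ((j:ℝ)+1) := by
      have h2 := Nat.add_one_mul_choose_eq (N-1) j
      have h1 : N - 1 + 1 = N := by omega
      rw [h1] at h2
      exact_mod_cast h2
    have hpos : (0:ℝ) < (N.choose (j+1) : ℝ) := by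
      exact_mod_cast Nat.choose_pos (by omega : j + 1 ≤ N)
    have hNpos : (0:ℝ) < (N:ℝ) := by exact_mod_cast hN
    have hN1pos : (0:ℝ) < (N:ℝ) + 1 := by positivity
    split
    · field_simp
      nlinarith [hid]
    · simp
  rw [Finset.sum_congr rfl hinner]
  have hsplit : (∑ j ∈ Finset.range N,
      if M ≤ j then ((j:ℝ)+1) / ((N:ℝ) * ((N:ℝ)+1)) else 0)
      = ∑ j ∈ Finset.Ico M N, ((j:ℝ)+1) / ((N:ℝ) * ((N:ℝ)+1)) := by
    rw [← Finset.sum_filter]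
    congr 1
    ext j
    simp [Finset.mem_filter, Finset.mem_Ico, Finset.mem_range, and_comm]
  rw [hsplit, Finset.sum_Ico_eq_sub _ (by omega : M ≤ N)]
  have hNpos : (0:ℝ) < (N:ℝ) := by exact_mod_cast hN
  have hN1pos : (0:ℝ) < (N:ℝ) + 1 := by positivity
  rw [← Finset.sum_div, ← Finset.sum_div, gauss_sum_real, gauss_sum_real]
  field_simp
end

section
/- In a simple voting system with N voters, unit weights, and fixed relative quota r ∈ (0,1), the Shapley-Shubik efficiency E_S = P_S(Σ x_i ≥ rN) converges to 1 - r as N → ∞. -/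
open scoped Classical

/-- In a simple voting system with `N` voters, unit weights, and fixed relative
quota `r ∈ (0,1)`, the Shapley-Shubik efficiency `E_S = P_S(Σ x_i ≥ rN)`
converges to `1 - r` as `N → ∞`. -/
theorem shapley_shubik_efficiency_limit (r : ℝ) (hr0 : 0 < r) (hr1 : r < 1) :
    Filter.Tendsto
      (fun N : ℕ => ∑ A ∈ Finset.univ.filter
          (fun A : Finset (Fin N) => r * (N : ℝ) ≤ (A.card : ℝ)),
        1 / (((N : ℝ) + 1) * (N.choose A.card : ℝ)))
      Filter.atTop (nhds (1 - r)) := by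
  have key : ∀ N : ℕ, (∑ A ∈ Finset.univ.filter
        (fun A : Finset (Fin N) => r * (N : ℝ) ≤ (A.card : ℝ)),
        1 / (((N : ℝ) + 1) * (N.choose A.card : ℝ)))
      = 1 - (⌈r * N⌉₊ : ℝ) / ((N : ℝ) + 1) := by
    intro N
    have hceil : ⌈r * N⌉₊ ≤ N := by
      apply Nat.ceil_le.2; nlinarith [Nat.cast_nonneg (α := ℝ) N]
    rw [Finset.sum_filter]
    have huniv : (Finset.univ : Finset (Finset (Fin N)))
        = (Finset.univ : Finset (Fin N)).powerset := (Finset.powerset_univ).symm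
    rw [huniv, Finset.sum_powerset_apply_card
        (fun m => if r * (N : ℝ) ≤ (m : ℝ) then 1 / (((N : ℝ) + 1) * (N.choose m : ℝ)) else 0)]
    simp only [Finset.card_univ, Fintype.card_fin]
    have step : ∀ m ∈ Finset.range (N + 1),
        N.choose m • (if r * (N : ℝ) ≤ (m : ℝ) then 1 / (((N : ℝ) + 1) * (N.choose m : ℝ)) else 0)
        = if ⌈r * N⌉₊ ≤ m then 1 / ((N : ℝ) + 1) else 0 := by
      intro m hm
      rw [Finset.mem_range, Nat.lt_succ_iff] at hm
      have hpos : (0 : ℝ) < (N.choose m : ℝ) := by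
        exact_mod_cast Nat.choose_pos hm
      have hiff : (r * (N : ℝ) ≤ (m : ℝ)) ↔ (⌈r * N⌉₊ ≤ m) := (Nat.ceil_le).symm
      by_cases h : ⌈r * N⌉₊ ≤ m
      · rw [if_pos h, if_pos (hiff.2 h), nsmul_eq_mul]
        field_simp
      · rw [if_neg h, if_neg (fun hc => h (hiff.1 hc)), smul_zero]
    rw [Finset.sum_congr rfl step, ← Finset.sum_filter]
    have hfe : (Finset.range (N + 1)).filter (fun m => ⌈r * N⌉₊ ≤ m)
        = Finset.Ico ⌈r * N⌉₊ (N + 1) := by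
      ext m
      simp [Finset.mem_filter, Finset.mem_range, Finset.mem_Ico, and_comm]
    rw [hfe, Finset.sum_const, Nat.card_Ico, nsmul_eq_mul]
    have h1 : ((N + 1 - ⌈r * N⌉₊ : ℕ) : ℝ) = (N : ℝ) + 1 - (⌈r * N⌉₊ : ℝ) := by
      push_cast [Nat.cast_sub (by omega : ⌈r * N⌉₊ ≤ N + 1)]
      ring
    rw [h1]
    have hN1 : ((N : ℝ) + 1) ≠ 0 := by positivity
    field_simp
  have hlim : Filter.Tendsto (fun N : ℕ => (⌈r * N⌉₊ : ℝ) / ((N : ℝ) + 1))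
      Filter.atTop (nhds r) := by
    have h0 : Filter.Tendsto (fun N : ℕ => 1 / ((N : ℝ) + 1)) Filter.atTop (nhds 0) :=
      tendsto_one_div_add_atTop_nhds_zero_nat
    apply tendsto_of_tendsto_of_tendsto_of_le_of_le
      (g := fun N : ℕ => r - r * (1 / ((N : ℝ) + 1)))
      (h := fun N : ℕ => r + 1 * (1 / ((N : ℝ) + 1)))
    · simpa using (tendsto_const_nhds (x := r)).sub ((tendsto_const_nhds (x := r)).mul h0)
    · simpa using (tendsto_const_nhds (x := r)).add ((tendsto_const_nhds (x := (1:ℝ))).mul h0)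
    · intro N
      have hpos : (0 : ℝ) < (N : ℝ) + 1 := by positivity
      rw [le_div_iff₀ hpos]
      have h1 : r * N ≤ (⌈r * N⌉₊ : ℝ) := Nat.le_ceil _
      have : (r - r * (1 / ((N : ℝ) + 1))) * ((N : ℝ) + 1) = r * N := by
        field_simp; ring
      linarith
    · intro N
      have hpos : (0 : ℝ) < (N : ℝ) + 1 := by positivity
      rw [div_le_iff₀ hpos]
      have h1 : (⌈r * N⌉₊ : ℝ) < r * N + 1 :=
        Nat.ceil_lt_add_one (by positivity)
      have : (r + 1 * (1 / ((N : ℝ) + 1))) * ((N : ℝ) + 1) = r * N + r + 1 := by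
        field_simp
      nlinarith [Nat.cast_nonneg (α := ℝ) N]
  simp only [key]
  exact Filter.Tendsto.const_sub 1 hlim
end

section
/- In a simple voting system with N voters, unit weights and relative quota r ∈ (0,1), the Shapley-Shubik affirmative success of a voter converges to 1/2 - r²/2 and the blocking success converges to 1/2 - (1-r)²/2 as N → ∞; hence the total success rate converges to 1 - (r² + (1-r)²)/2. -/
set_option maxHeartbeats 1000000


open scoped Classical

/-- Shapley-Shubik affirmative success of voter 1 in the simple voting system
with `N+1` voters, unit weights and relative quota `r` (winning = at least
`⌈r(N+1)⌉` yes-votes). -/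
noncomputable def ssAffSuccess (r : ℝ) (N : ℕ) : ℝ :=
  ∑ A ∈ Finset.univ.filter
      (fun A : Finset (Fin (N + 1)) =>
        (0 : Fin (N + 1)) ∈ A ∧
          ⌈r * ((N : ℝ) + 1)⌉₊ - 1 ≤ (A.erase (0 : Fin (N + 1))).card),
    1 / (((N : ℝ) + 2) * ((N + 1).choose A.card : ℝ))

/-- Shapley-Shubik blocking success of voter 1 in the same system. -/
noncomputable def ssBlockSuccess (r : ℝ) (N : ℕ) : ℝ :=
  ∑ A ∈ Finset.univ.filter
      (fun A : Finset (Fin (N + 1)) =>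
        (0 : Fin (N + 1)) ∉ A ∧ A.card ≤ ⌈r * ((N : ℝ) + 1)⌉₊ - 1),
    1 / (((N : ℝ) + 2) * ((N + 1).choose A.card : ℝ))

/- ### Auxiliary lemmas -/

lemma aux_sum_powerset_card {α : Type*} [DecidableEq α] (s : Finset α) (g : ℕ → ℝ) :
    ∑ B ∈ s.powerset, g B.card
      = ∑ k ∈ Finset.range (s.card + 1), (s.card.choose k : ℝ) * g k := by
  rw [Finset.sum_powerset]
  refine Finset.sum_congr rfl fun k _ => ?_
  have : ∀ B ∈ Finset.powersetCard k s, g B.card = g k := by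
    intro B hB
    rw [(Finset.mem_powersetCard.1 hB).2]
  rw [Finset.sum_congr rfl this, Finset.sum_const, Finset.card_powersetCard,
    nsmul_eq_mul]

lemma aux_gauss1 (n : ℕ) : ∑ k ∈ Finset.range n, ((k : ℝ) + 1) = n * (n + 1) / 2 := by
  induction n with
  | zero => simp
  | succ n ih => rw [Finset.sum_range_succ, ih]; push_cast; ring

lemma aux_gauss0 (n : ℕ) : ∑ k ∈ Finset.range n, (k : ℝ) = n * (n - 1) / 2 := by
  induction n with
  | zero => simp
  | succ n ih => rw [Finset.sum_range_succ, ih]; push_cast; ring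

/-- Affirmative success closed form. -/
lemma aff_closed (r : ℝ) (hr0 : 0 < r) (hr1 : r < 1) (N : ℕ) :
    ssAffSuccess r N =
      1 / 2 - ((⌈r * ((N : ℝ) + 1)⌉₊ : ℝ) / ((N : ℝ) + 1))
        * (((⌈r * ((N : ℝ) + 1)⌉₊ : ℝ) - 1) / ((N : ℝ) + 2)) / 2 := by
  set q : ℕ := ⌈r * ((N : ℝ) + 1)⌉₊ with hq
  have hNpos : (0 : ℝ) < (N : ℝ) + 1 := by positivity
  have hq1 : 1 ≤ q := Nat.one_le_iff_ne_zero.2 (by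
    simp only [hq, ne_eq, Nat.ceil_eq_zero, not_le]
    positivity)
  have hqN : q ≤ N + 1 := by
    rw [hq]
    refine Nat.ceil_le.2 ?_
    have : r * ((N : ℝ) + 1) ≤ 1 * ((N : ℝ) + 1) :=
      mul_le_mul_of_nonneg_right hr1.le (by positivity)
    simpa using this.trans_eq (by push_cast; ring)
  -- step 1 : rewrite the sum over subsets via the bijection `A ↦ A.erase 0`
  have step1 : ssAffSuccess r N =
      ∑ B ∈ (Finset.univ.erase (0 : Fin (N + 1))).powerset,
        (if q - 1 ≤ B.card then 1 / (((N : ℝ) + 2) * ((N + 1).choose (B.card + 1) : ℝ)) else 0) := by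
    rw [ssAffSuccess, ← Finset.sum_filter]
    refine Finset.sum_nbij' (fun A => A.erase (0 : Fin (N + 1)))
      (fun B => insert (0 : Fin (N + 1)) B) ?_ ?_ ?_ ?_ ?_
    · intro A hA
      simp only [Finset.mem_filter, Finset.mem_univ, true_and] at hA
      simp only [Finset.mem_filter, Finset.mem_powerset]
      exact ⟨Finset.erase_subset_erase _ (Finset.subset_univ A), hA.2⟩
    · intro B hB
      simp only [Finset.mem_filter, Finset.mem_powerset, Finset.subset_erase] at hB
      simp only [Finset.mem_filter, Finset.mem_univ, true_and]
      constructor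
      · exact Finset.mem_insert_self _ _
      · rw [Finset.erase_insert hB.1.2]; exact hB.2
    · intro A hA
      simp only [Finset.mem_filter, Finset.mem_univ, true_and] at hA
      exact Finset.insert_erase hA.1
    · intro B hB
      simp only [Finset.mem_filter, Finset.mem_powerset, Finset.subset_erase] at hB
      exact Finset.erase_insert hB.1.2
    · intro A hA
      simp only [Finset.mem_filter, Finset.mem_univ, true_and] at hA
      rw [Finset.card_erase_add_one hA.1]
  -- step 2 : reduce to a sum over cardinalities
  have hcard : (Finset.univ.erase (0 : Fin (N + 1))).card = N := by
    rw [Finset.card_erase_of_mem (Finset.mem_univ _), Finset.card_univ, Fintype.card_fin]; omega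
  have step2 : ssAffSuccess r N =
      ∑ k ∈ Finset.range (N + 1),
        (N.choose k : ℝ) * (if q - 1 ≤ k then 1 / (((N : ℝ) + 2) * ((N + 1).choose (k + 1) : ℝ)) else 0) := by
    rw [step1,
      aux_sum_powerset_card (Finset.univ.erase (0 : Fin (N + 1)))
        (fun c => if q - 1 ≤ c then 1 / (((N : ℝ) + 2) * ((N + 1).choose (c + 1) : ℝ)) else 0),
      hcard]
  -- step 3 : simplify each term
  have step3 : ssAffSuccess r N =
      ∑ k ∈ Finset.range (N + 1),
        (if q - 1 ≤ k then ((k : ℝ) + 1) / (((N : ℝ) + 1) * ((N : ℝ) + 2)) else 0) := by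
    rw [step2]
    refine Finset.sum_congr rfl fun k hk => ?_
    rw [Finset.mem_range] at hk
    rw [mul_ite, mul_zero]
    refine if_congr Iff.rfl ?_ rfl
    have hc : ((N + 1).choose (k + 1) : ℝ) ≠ 0 := by
      have := Nat.choose_pos (n := N + 1) (k := k + 1) (by omega)
      positivity
    have hid : ((N : ℝ) + 1) * (N.choose k : ℝ) = ((N + 1).choose (k + 1) : ℝ) * ((k : ℝ) + 1) := by
      have := Nat.add_one_mul_choose_eq N k
      have := congrArg (fun n : ℕ => (n : ℝ)) this
      push_cast at this
      linarith [this]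
    field_simp
    nlinarith [hid]
  -- step 4 : evaluate the sum
  have hfilter : (Finset.range (N + 1)).filter (fun k => q - 1 ≤ k) = Finset.Ico (q - 1) (N + 1) := by
    ext k
    simp only [Finset.mem_filter, Finset.mem_range, Finset.mem_Ico]
    omega
  have step4 : ssAffSuccess r N =
      (((N : ℝ) + 1) * ((N : ℝ) + 2) / 2 - ((q : ℝ) - 1) * (q : ℝ) / 2)
        / (((N : ℝ) + 1) * ((N : ℝ) + 2)) := by
    rw [step3, ← Finset.sum_filter, hfilter,
      Finset.sum_Ico_eq_sub _ (by omega : q - 1 ≤ N + 1)]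
    rw [← Finset.sum_div, ← Finset.sum_div, aux_gauss1, aux_gauss1]
    have hcast : ((q - 1 : ℕ) : ℝ) = (q : ℝ) - 1 := by
      have : (1 : ℕ) ≤ q := hq1
      push_cast [this]
      ring
    rw [hcast]
    push_cast
    have h1 : ((q : ℝ) - 1) * ((q : ℝ) - 1 + 1) / 2 = ((q : ℝ) - 1) * (q : ℝ) / 2 := by ring
    rw [h1]
    ring
  rw [step4]
  have h2 : ((N : ℝ) + 1) * ((N : ℝ) + 2) ≠ 0 := by positivity
  field_simp

/-- Blocking success closed form. -/
lemma block_closed (r : ℝ) (hr0 : 0 < r) (hr1 : r < 1) (N : ℕ) :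
    ssBlockSuccess r N =
      (⌈r * ((N : ℝ) + 1)⌉₊ : ℝ) / ((N : ℝ) + 2)
        - ((⌈r * ((N : ℝ) + 1)⌉₊ : ℝ) / ((N : ℝ) + 1))
          * (((⌈r * ((N : ℝ) + 1)⌉₊ : ℝ) - 1) / ((N : ℝ) + 2)) / 2 := by
  set q : ℕ := ⌈r * ((N : ℝ) + 1)⌉₊ with hq
  have hNpos : (0 : ℝ) < (N : ℝ) + 1 := by positivity
  have hq1 : 1 ≤ q := Nat.one_le_iff_ne_zero.2 (by
    simp only [hq, ne_eq, Nat.ceil_eq_zero, not_le]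
    positivity)
  have hqN : q ≤ N + 1 := by
    rw [hq]
    refine Nat.ceil_le.2 ?_
    have : r * ((N : ℝ) + 1) ≤ 1 * ((N : ℝ) + 1) :=
      mul_le_mul_of_nonneg_right hr1.le (by positivity)
    simpa using this.trans_eq (by push_cast; ring)
  -- step 1 : the sets in question are exactly the subsets of `univ.erase 0`
  have hset : Finset.univ.filter
      (fun A : Finset (Fin (N + 1)) =>
        (0 : Fin (N + 1)) ∉ A ∧ A.card ≤ q - 1)
      = (Finset.univ.erase (0 : Fin (N + 1))).powerset.filter (fun A => A.card ≤ q - 1) := by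
    ext A
    simp only [Finset.mem_filter, Finset.mem_univ, true_and, Finset.mem_powerset,
      Finset.subset_erase, Finset.subset_univ, true_and]
  have step1 : ssBlockSuccess r N =
      ∑ B ∈ (Finset.univ.erase (0 : Fin (N + 1))).powerset,
        (if B.card ≤ q - 1 then 1 / (((N : ℝ) + 2) * ((N + 1).choose B.card : ℝ)) else 0) := by
    rw [ssBlockSuccess, hset, Finset.sum_filter]
  have hcard : (Finset.univ.erase (0 : Fin (N + 1))).card = N := by
    rw [Finset.card_erase_of_mem (Finset.mem_univ _), Finset.card_univ, Fintype.card_fin]; omega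
  have step2 : ssBlockSuccess r N =
      ∑ k ∈ Finset.range (N + 1),
        (N.choose k : ℝ) * (if k ≤ q - 1 then 1 / (((N : ℝ) + 2) * ((N + 1).choose k : ℝ)) else 0) := by
    rw [step1,
      aux_sum_powerset_card (Finset.univ.erase (0 : Fin (N + 1)))
        (fun c => if c ≤ q - 1 then 1 / (((N : ℝ) + 2) * ((N + 1).choose c : ℝ)) else 0),
      hcard]
  have step3 : ssBlockSuccess r N =
      ∑ k ∈ Finset.range (N + 1),
        (if k ≤ q - 1 then ((N : ℝ) + 1 - (k : ℝ)) / (((N : ℝ) + 1) * ((N : ℝ) + 2)) else 0) := by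
    rw [step2]
    refine Finset.sum_congr rfl fun k hk => ?_
    rw [Finset.mem_range] at hk
    rw [mul_ite, mul_zero]
    refine if_congr Iff.rfl ?_ rfl
    have hc : ((N + 1).choose k : ℝ) ≠ 0 := by
      have := Nat.choose_pos (n := N + 1) (k := k) (by omega)
      positivity
    have hid : (N.choose k : ℝ) * ((N : ℝ) + 1) = ((N + 1).choose k : ℝ) * ((N : ℝ) + 1 - (k : ℝ)) := by
      have h := Nat.choose_mul_succ_eq N k
      have h2 := congrArg (fun n : ℕ => (n : ℝ)) h
      have hsub : ((N + 1 - k : ℕ) : ℝ) = (N : ℝ) + 1 - (k : ℝ) := by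
        have : k ≤ N + 1 := by omega
        push_cast [this]
        ring
      push_cast [hsub] at h2
      linarith [h2]
    field_simp
    nlinarith [hid]
  have hfilter : (Finset.range (N + 1)).filter (fun k => k ≤ q - 1) = Finset.range q := by
    ext k
    simp only [Finset.mem_filter, Finset.mem_range]
    omega
  have step4 : ssBlockSuccess r N =
      ((q : ℝ) * ((N : ℝ) + 1) - (q : ℝ) * ((q : ℝ) - 1) / 2)
        / (((N : ℝ) + 1) * ((N : ℝ) + 2)) := by
    rw [step3, ← Finset.sum_filter, hfilter, ← Finset.sum_div]
    congr 1
    rw [Finset.sum_sub_distrib, Finset.sum_const, aux_gauss0, Finset.card_range,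
      nsmul_eq_mul]
  rw [step4]
  have h2 : ((N : ℝ) + 1) * ((N : ℝ) + 2) ≠ 0 := by positivity
  field_simp

lemma tendsto_inv_nat_add_two :
    Filter.Tendsto (fun N : ℕ => 1 / ((N : ℝ) + 2)) Filter.atTop (nhds 0) := by
  have h : Filter.Tendsto (fun N : ℕ => (N : ℝ) + 2) Filter.atTop Filter.atTop :=
    Filter.tendsto_atTop_add_const_right _ 2 tendsto_natCast_atTop_atTop
  simpa only [one_div, Pi.inv_def] using h.inv_tendsto_atTop

lemma tendsto_ratio_q (r : ℝ) (hr0 : 0 < r) (hr1 : r < 1) :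
    Filter.Tendsto (fun N : ℕ => (⌈r * ((N : ℝ) + 1)⌉₊ : ℝ) / ((N : ℝ) + 1))
      Filter.atTop (nhds r) := by
  have hlow : ∀ N : ℕ, r ≤ (⌈r * ((N : ℝ) + 1)⌉₊ : ℝ) / ((N : ℝ) + 1) := by
    intro N
    have hNpos : (0 : ℝ) < (N : ℝ) + 1 := by positivity
    rw [le_div_iff₀ hNpos]
    exact Nat.le_ceil _
  have hhigh : ∀ N : ℕ, (⌈r * ((N : ℝ) + 1)⌉₊ : ℝ) / ((N : ℝ) + 1) ≤ r + 1 / ((N : ℝ) + 1) := by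
    intro N
    have hNpos : (0 : ℝ) < (N : ℝ) + 1 := by positivity
    rw [div_le_iff₀ hNpos]
    have := Nat.ceil_lt_add_one (a := r * ((N : ℝ) + 1)) (by positivity)
    have h1 : (r + 1 / ((N : ℝ) + 1)) * ((N : ℝ) + 1) = r * ((N : ℝ) + 1) + 1 := by
      field_simp
    rw [h1]
    linarith
  have hR : Filter.Tendsto (fun N : ℕ => r + 1 / ((N : ℝ) + 1)) Filter.atTop (nhds r) := by
    have := tendsto_one_div_add_atTop_nhds_zero_nat (𝕜 := ℝ)
    have h := (tendsto_const_nhds (x := r) (f := Filter.atTop (α := ℕ))).add this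
    simpa using h
  exact tendsto_of_tendsto_of_tendsto_of_le_of_le tendsto_const_nhds hR hlow hhigh

/-- In a simple voting system with unit weights and relative quota `r ∈ (0,1)`,
the Shapley-Shubik affirmative success of a voter converges to `1/2 - r²/2`, the
blocking success converges to `1/2 - (1-r)²/2`, and hence the total success rate
converges to `1 - (r² + (1-r)²)/2`, as the number of voters tends to infinity. -/
theorem shapley_shubik_success_limit (r : ℝ) (hr0 : 0 < r) (hr1 : r < 1) :
    Filter.Tendsto (fun N => ssAffSuccess r N) Filter.atTop
      (nhds (1 / 2 - r ^ 2 / 2)) ∧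
    Filter.Tendsto (fun N => ssBlockSuccess r N) Filter.atTop
      (nhds (1 / 2 - (1 - r) ^ 2 / 2)) ∧
    Filter.Tendsto (fun N => ssAffSuccess r N + ssBlockSuccess r N) Filter.atTop
      (nhds (1 - (r ^ 2 + (1 - r) ^ 2) / 2)) := by
  set Q : ℕ → ℝ := fun N => (⌈r * ((N : ℝ) + 1)⌉₊ : ℝ) with hQ
  have t1 : Filter.Tendsto (fun N : ℕ => Q N / ((N : ℝ) + 1)) Filter.atTop (nhds r) :=
    tendsto_ratio_q r hr0 hr1
  have tinv2 := tendsto_inv_nat_add_two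
  have tNN : Filter.Tendsto (fun N : ℕ => ((N : ℝ) + 1) / ((N : ℝ) + 2)) Filter.atTop (nhds 1) := by
    have h : ∀ N : ℕ, ((N : ℝ) + 1) / ((N : ℝ) + 2) = 1 - 1 / ((N : ℝ) + 2) := by
      intro N
      have h2 : ((N : ℝ) + 2) ≠ 0 := by positivity
      field_simp
      ring
    have := (tendsto_const_nhds (x := (1 : ℝ)) (f := Filter.atTop (α := ℕ))).sub tinv2
    simp only [sub_zero] at this
    exact Filter.Tendsto.congr (fun N => (h N).symm) this
  have t2 : Filter.Tendsto (fun N : ℕ => Q N / ((N : ℝ) + 2)) Filter.atTop (nhds r) := by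
    have h : ∀ N : ℕ, Q N / ((N : ℝ) + 2)
        = (Q N / ((N : ℝ) + 1)) * (((N : ℝ) + 1) / ((N : ℝ) + 2)) := by
      intro N
      have h1 : ((N : ℝ) + 1) ≠ 0 := by positivity
      have h2 : ((N : ℝ) + 2) ≠ 0 := by positivity
      field_simp
    have := t1.mul tNN
    simp only [mul_one] at this
    exact Filter.Tendsto.congr (fun N => (h N).symm) this
  have t3 : Filter.Tendsto (fun N : ℕ => (Q N - 1) / ((N : ℝ) + 2)) Filter.atTop (nhds r) := by
    have h : ∀ N : ℕ, (Q N - 1) / ((N : ℝ) + 2)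
        = Q N / ((N : ℝ) + 2) - 1 / ((N : ℝ) + 2) := by
      intro N; ring
    have := t2.sub tinv2
    simp only [sub_zero] at this
    exact Filter.Tendsto.congr (fun N => (h N).symm) this
  have haff : Filter.Tendsto (fun N => ssAffSuccess r N) Filter.atTop
      (nhds (1 / 2 - r ^ 2 / 2)) := by
    have hmain := ((tendsto_const_nhds (x := (1:ℝ)/2) (f := Filter.atTop (α := ℕ))).sub
      (((t1.mul t3)).div_const 2))
    have heq : (1 : ℝ) / 2 - r * r / 2 = 1 / 2 - r ^ 2 / 2 := by ring
    rw [heq] at hmain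
    refine Filter.Tendsto.congr (fun N => ?_) hmain
    rw [aff_closed r hr0 hr1 N]
  have hblock : Filter.Tendsto (fun N => ssBlockSuccess r N) Filter.atTop
      (nhds (1 / 2 - (1 - r) ^ 2 / 2)) := by
    have hmain := t2.sub ((t1.mul t3).div_const 2)
    have heq : r - r * r / 2 = 1 / 2 - (1 - r) ^ 2 / 2 := by ring
    rw [heq] at hmain
    refine Filter.Tendsto.congr (fun N => ?_) hmain
    rw [block_closed r hr0 hr1 N]
  refine ⟨haff, hblock, ?_⟩
  have := haff.add hblock
  have heq : (1 : ℝ) / 2 - r ^ 2 / 2 + (1 / 2 - (1 - r) ^ 2 / 2)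
      = 1 - (r ^ 2 + (1 - r) ^ 2) / 2 := by ring
  rwa [heq] at this
end
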